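/- Let S be a decision rule system with n(S) > 0 and δ̄ ∈ EV(S). Consider the following round-based process: set α := ∅; while S_α ≠ ∅ and some rule of S_α has nonempty left-hand side, choose any node cover B of the hypergraph G((S_α)^max) with |B| ≤ β((S_α)^max) · ln|(S_α)^max| + 1, and replace α by α ∪ {a = δ : a ∈ B, (a=δ) ∈ K(S,δ̄)}. Then: (i) the process terminates after at most d(S) ≤ h_EAR(S) rounds; (ii) the total number of equations added over all rounds is at most h_EAR(S)³ · ln(k(S)+1) + h_EAR(S); and (iii) upon termination, the set {r ∈ S : K(r) ∪ α is consistent} equals the set of rules of S realizable for δ̄. In particular, this process describes the work of a decision tree Γ over S that solves the problem EAR(S) and satisfies h(Γ) ≤ h_EAR(S)³ · ln(k(S)+1) + h_EAR(S). -/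

import Mathlib

/-! Formalization of decision rule systems and decision trees
(Durdymyradov & Moshkov, "Greedy Algorithm for Inference of Decision Trees
from Decision Rule Systems"). -/

/-- Values of attributes: `some δ` is a natural number value, `none` is the
special symbol `*` (interpreted as a value not occurring in the system). -/
abbrev Val := Option ℕ

/-- A decision rule `(a_{i₁}=δ₁) ∧ ⋯ ∧ (a_{iₘ}=δₘ) → σ`: the left-hand side
is a finite set of equations (attribute, value), the right-hand side a decision. -/
structure Rule where
  lhs : Finset (ℕ × ℕ)
  rhs : ℕ
deriving DecidableEq

namespace Rule

/-- `A(r)`: the set of attributes of a rule. -/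
def attrs (r : Rule) : Finset ℕ := r.lhs.image Prod.fst

/-- `K(r)`: the equation system of the left-hand side of a rule. -/
def K (r : Rule) : Finset (ℕ × Val) := r.lhs.image (fun p => (p.1, some p.2))

/-- the length of a rule -/
def len (r : Rule) : ℕ := r.lhs.card

/-- A rule is wellformed if the attributes in its left-hand side are pairwise
different, i.e. each attribute carries at most one equation. -/
def WF (r : Rule) : Prop := ∀ p ∈ r.lhs, ∀ q ∈ r.lhs, p.1 = q.1 → p = q

end Rule

/-- `A(S)`: the set of attributes of a system of decision rules. -/
def attrsS (S : Finset Rule) : Finset ℕ := S.biUnion Rule.attrs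

/-- `n(S) = |A(S)|`. -/
def nS (S : Finset Rule) : ℕ := (attrsS S).card

/-- `d(S)`: maximum length of a rule of `S`. -/
def dS (S : Finset Rule) : ℕ := S.sup Rule.len

/-- `V_S(a)`: the set of values δ such that the equation `a = δ` occurs in `S`. -/
def VS (S : Finset Rule) (a : ℕ) : Finset ℕ :=
  S.biUnion (fun r => (r.lhs.filter (fun p => p.1 = a)).image Prod.snd)

/-- `EV_S(a) = V_S(a) ∪ {*}`. -/
def EVS (S : Finset Rule) (a : ℕ) : Finset Val := insert none ((VS S a).image some)

/-- `k(S) = max{|V_S(a)| : a ∈ A(S)}`. -/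
def kS (S : Finset Rule) : ℕ := (attrsS S).sup (fun a => (VS S a).card)

/-- A (wellformed) decision rule system: a finite nonempty set of wellformed rules. -/
def SysWF (S : Finset Rule) : Prop := S.Nonempty ∧ ∀ r ∈ S, r.WF

/-- An equation system is consistent if it does not assign two different values
to the same attribute. -/
def Consistent (E : Finset (ℕ × Val)) : Prop :=
  ∀ p ∈ E, ∀ q ∈ E, p.1 = q.1 → p.2 = q.2

instance : DecidablePred Consistent := fun E => by unfold Consistent; infer_instance

/-- `r_α`: the rule obtained from `r` by deleting from its left-hand side all
equations belonging to `α`. -/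
def Rule.restrict (r : Rule) (α : Finset (ℕ × Val)) : Rule :=
  ⟨r.lhs.filter (fun p => ((p.1, (some p.2 : Val)) ∉ α)), r.rhs⟩

/-- `S_α`: the set of rules `r_α` for `r ∈ S` with `K(r) ∪ α` consistent. -/
def sysRestrict (S : Finset Rule) (α : Finset (ℕ × Val)) : Finset Rule :=
  (S.filter (fun r => Consistent (r.K ∪ α))).image (fun r => r.restrict α)

/-- Extended decision trees: terminal nodes are labeled with sets of rules, and a
working node is labeled with an attribute and has one child for each value
(only the children corresponding to values in `EV_S(a)` are relevant). -/
inductive DT where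
  | leaf (τ : Finset Rule) : DT
  | node (a : ℕ) (c : Val → DT) : DT

/-- `Γ` is an extended decision tree over `S`: working nodes are labeled with
attributes of `A(S)` (with edges labeled by the elements of `EV_S(a)`),
terminal nodes with subsets of `S`. -/
def DT.Over (S : Finset Rule) : DT → Prop
  | .leaf τ => τ ⊆ S
  | .node a c => a ∈ attrsS S ∧ ∀ v ∈ EVS S a, DT.Over S (c v)

/-- `h(Γ)`: the maximum number of working nodes in a complete path of `Γ`. -/
def DT.depth (S : Finset Rule) : DT → ℕ
  | .leaf _ => 0
  | .node a c => 1 + (EVS S a).sup (fun v => DT.depth S (c v))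

/-- The number of terminal nodes of `Γ`. -/
def DT.numLeaves (S : Finset Rule) : DT → ℕ
  | .leaf _ => 1
  | .node a c => ∑ v ∈ EVS S a, DT.numLeaves S (c v)

/-- `Γ` solves `EAR(S)` starting from the already accumulated equation system `E`:
for every complete path `ξ` with consistent `K(ξ)`, every rule of the terminal
label `τ(ξ)` satisfies `K(r) ⊆ K(ξ)`, and every other rule of `S` has
`K(r) ∪ K(ξ)` inconsistent. -/
def DT.SolvesFrom (S : Finset Rule) : DT → Finset (ℕ × Val) → Prop
  | .leaf τ, E => Consistent E →
      (∀ r ∈ τ, r.K ⊆ E) ∧ ∀ r ∈ S, r ∉ τ → ¬ Consistent (r.K ∪ E)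
  | .node a c, E => ∀ v ∈ EVS S a, DT.SolvesFrom S (c v) (insert (a, v) E)

/-- `Γ` is a decision tree over `S` solving the problem `EAR(S)`. -/
def DT.SolvesEAR (S : Finset Rule) (Γ : DT) : Prop := Γ.Over S ∧ Γ.SolvesFrom S ∅

/-- `h_EAR(S)`: the minimum depth of a decision tree over `S` solving `EAR(S)`. -/
noncomputable def hEAR (S : Finset Rule) : ℕ :=
  sInf {n | ∃ Γ : DT, DT.SolvesEAR S Γ ∧ DT.depth S Γ = n}

/-- A node cover of the hypergraph `G(S)`. -/
def IsNodeCover (S : Finset Rule) (B : Finset ℕ) : Prop :=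
  B ⊆ attrsS S ∧ ∀ r ∈ S, r.attrs.Nonempty → (r.attrs ∩ B).Nonempty

/-- `β(S)`: the minimum cardinality of a node cover of `G(S)`. -/
noncomputable def betaS (S : Finset Rule) : ℕ :=
  sInf {k | ∃ B : Finset ℕ, IsNodeCover S B ∧ B.card = k}

/-- `M` is a possible choice of `S^max`: a set of rules of `S` of length `d(S)`
containing exactly one representative from each equivalence class
(`r₁ ∼ r₂ iff K(r₁) = K(r₂)`) of the set of rules of length `d(S)`, and
no other rules. -/
def IsMaxSet (S M : Finset Rule) : Prop :=
  (∀ r ∈ M, r ∈ S ∧ r.len = dS S) ∧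
  (∀ r ∈ S, r.len = dS S → ∃ r' ∈ M, r'.K = r.K) ∧
  (∀ r₁ ∈ M, ∀ r₂ ∈ M, r₁.K = r₂.K → r₁ = r₂)

/-- `δ̄ ∈ EV(S)`, a tuple represented as a function on attributes. -/
def InEV (S : Finset Rule) (f : ℕ → Val) : Prop := ∀ a ∈ attrsS S, f a ∈ EVS S a

/-- `K(S, δ̄)`. -/
def KofTuple (S : Finset Rule) (f : ℕ → Val) : Finset (ℕ × Val) :=
  (attrsS S).image (fun a => (a, f a))

/-- The rule `r` is realizable for the tuple `δ̄`, i.e. `K(r) ⊆ K(S, δ̄)`. -/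
def Realizable (S : Finset Rule) (f : ℕ → Val) (r : Rule) : Prop :=
  r.K ⊆ KofTuple S f

instance (S : Finset Rule) (f : ℕ → Val) : DecidablePred (Realizable S f) :=
  fun r => by unfold Realizable; infer_instance

/-- The equations `{a = δ : a ∈ B, (a = δ) ∈ K(S, δ̄)}` added during a round
in which the values of the attributes from `B` are computed. -/
def roundEqs (S : Finset Rule) (f : ℕ → Val) (B : Finset ℕ) : Finset (ℕ × Val) :=
  (KofTuple S f).filter (fun p => p.1 ∈ B)

/-- The equation system `α` accumulated after the rounds with attribute sets
`Bs` (head of the list first). -/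
def accAlpha (S : Finset Rule) (f : ℕ → Val) (Bs : List (Finset ℕ)) : Finset (ℕ × Val) :=
  (Bs.map (roundEqs S f)).foldr (· ∪ ·) ∅

/-- A round of the process performed with the current accumulated equation
system `α` and the chosen attribute set `B`: the round is performed only when
`S_α ≠ ∅` and some rule of `S_α` has nonempty left-hand side, and `B` is a
node cover of the hypergraph `G((S_α)^max)` with
`|B| ≤ β((S_α)^max) · ln |(S_α)^max| + 1`. -/
def RoundOK (S : Finset Rule) (α : Finset (ℕ × Val)) (B : Finset ℕ) : Prop :=
  (sysRestrict S α).Nonempty ∧ (∃ r ∈ sysRestrict S α, r.lhs ≠ ∅) ∧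
  ∃ M, IsMaxSet (sysRestrict S α) M ∧ IsNodeCover M B ∧
    (B.card : ℝ) ≤ (betaS M : ℝ) * Real.log M.card + 1

/-- `Bs` is a (partial) run of the round-based process on the tuple `δ̄`
(the function `f`): starting from `α = ∅`, each round `i` is performed
with the equation system accumulated during the previous rounds. -/
def PartialRun (S : Finset Rule) (f : ℕ → Val) (Bs : List (Finset ℕ)) : Prop :=
  ∀ i : Fin Bs.length, RoundOK S (accAlpha S f (Bs.take i)) (Bs.get i)

/-- The stopping condition of the process: `S_α = ∅` or every rule of `S_α`
has empty left-hand side. -/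
def Finished (S : Finset Rule) (f : ℕ → Val) (Bs : List (Finset ℕ)) : Prop :=
  sysRestrict S (accAlpha S f Bs) = ∅ ∨
    ∀ r ∈ sysRestrict S (accAlpha S f Bs), r.lhs = ∅

section Basics

open Finset

lemma mem_K {r : Rule} {a δ : ℕ} : ((a, some δ) : ℕ × Val) ∈ r.K ↔ (a, δ) ∈ r.lhs := by
  simp only [Rule.K, Finset.mem_image, Prod.mk.injEq, Option.some.injEq]
  constructor
  · rintro ⟨p, hp, rfl, rfl⟩; exact hp
  · intro h; exact ⟨(a, δ), h, rfl, rfl⟩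

lemma mem_K_elim {r : Rule} {p : ℕ × Val} (h : p ∈ r.K) :
    ∃ δ : ℕ, p.2 = some δ ∧ (p.1, δ) ∈ r.lhs := by
  obtain ⟨q, hq, he⟩ := Finset.mem_image.mp h
  exact ⟨q.2, by rw [← he], by rw [← he]; exact hq⟩

lemma K_card (r : Rule) : r.K.card = r.len := by
  rw [Rule.K, Rule.len]
  apply Finset.card_image_of_injOn
  intro p _ q _ h
  cases p; cases q
  simpa [Prod.ext_iff] using h

lemma K_lhs_eq {r₁ r₂ : Rule} (h : r₁.K = r₂.K) : r₁.lhs = r₂.lhs := by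
  ext ⟨a, δ⟩
  rw [← mem_K, ← mem_K, h]

lemma attrs_nonempty_iff {r : Rule} : r.attrs.Nonempty ↔ r.lhs ≠ ∅ := by
  rw [Rule.attrs, Finset.image_nonempty, Finset.nonempty_iff_ne_empty]

lemma mem_attrs {r : Rule} {a : ℕ} : a ∈ r.attrs ↔ ∃ δ, (a, δ) ∈ r.lhs := by
  simp only [Rule.attrs, Finset.mem_image]
  constructor
  · rintro ⟨⟨b, δ⟩, hp, rfl⟩; exact ⟨δ, hp⟩
  · rintro ⟨δ, h⟩; exact ⟨(a, δ), h, rfl⟩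

lemma consistent_subset {E F : Finset (ℕ × Val)} (hEF : E ⊆ F) (h : Consistent F) :
    Consistent E := fun p hp q hq => h p (hEF hp) q (hEF hq)

lemma consistent_of_graph {g : ℕ → Val} {E : Finset (ℕ × Val)}
    (h : ∀ p ∈ E, p.2 = g p.1) : Consistent E := by
  intro p hp q hq he
  rw [h p hp, h q hq, he]

lemma consistent_K_of_WF {r : Rule} (h : r.WF) : Consistent r.K := by
  intro p hp q hq he
  obtain ⟨δ, hδ, hmem⟩ := mem_K_elim hp
  obtain ⟨δ', hδ', hmem'⟩ := mem_K_elim hq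
  rw [hδ, hδ']
  have := h _ hmem _ hmem' he
  simp only [Prod.ext_iff] at this
  simp [this.2]

lemma mem_KofTuple {S : Finset Rule} {f : ℕ → Val} {p : ℕ × Val} :
    p ∈ KofTuple S f ↔ p.1 ∈ attrsS S ∧ p.2 = f p.1 := by
  simp only [KofTuple, Finset.mem_image]
  constructor
  · rintro ⟨a, ha, rfl⟩; exact ⟨ha, rfl⟩
  · rintro ⟨ha, h2⟩; exact ⟨p.1, ha, by rw [Prod.ext_iff]; exact ⟨rfl, h2.symm⟩⟩

lemma consistent_KofTuple (S : Finset Rule) (f : ℕ → Val) : Consistent (KofTuple S f) := by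
  apply consistent_of_graph (g := f)
  intro p hp
  exact (mem_KofTuple.mp hp).2

lemma mem_attrsS {S : Finset Rule} {r : Rule} {a : ℕ} (hr : r ∈ S) (ha : a ∈ r.attrs) :
    a ∈ attrsS S := Finset.mem_biUnion.mpr ⟨r, hr, ha⟩

lemma mem_VS {S : Finset Rule} {r : Rule} {a δ : ℕ} (hr : r ∈ S) (h : (a, δ) ∈ r.lhs) :
    δ ∈ VS S a := by
  apply Finset.mem_biUnion.mpr
  exact ⟨r, hr, Finset.mem_image.mpr ⟨(a, δ), Finset.mem_filter.mpr ⟨h, rfl⟩, rfl⟩⟩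

lemma none_mem_EVS (S : Finset Rule) (a : ℕ) : (none : Val) ∈ EVS S a :=
  Finset.mem_insert_self _ _

lemma some_mem_EVS {S : Finset Rule} {a δ : ℕ} (h : δ ∈ VS S a) : (some δ : Val) ∈ EVS S a :=
  Finset.mem_insert_of_mem (Finset.mem_image_of_mem _ h)

lemma EVS_card_le {S : Finset Rule} {a : ℕ} (ha : a ∈ attrsS S) :
    (EVS S a).card ≤ kS S + 1 := by
  have h1 : (EVS S a).card ≤ ((VS S a).image some).card + 1 := Finset.card_insert_le _ _
  have h2 : ((VS S a).image some).card ≤ (VS S a).card := Finset.card_image_le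
  have h3 : (VS S a).card ≤ kS S := Finset.le_sup (f := fun a => (VS S a).card) ha
  omega

end Basics
section Restrict

open Finset

lemma restrict_lhs_subset (r : Rule) (α : Finset (ℕ × Val)) :
    (r.restrict α).lhs ⊆ r.lhs := Finset.filter_subset _ _

lemma restrict_WF {r : Rule} (h : r.WF) (α : Finset (ℕ × Val)) : (r.restrict α).WF :=
  fun p hp q hq => h p (restrict_lhs_subset r α hp) q (restrict_lhs_subset r α hq)

lemma mem_restrict_lhs {r : Rule} {α : Finset (ℕ × Val)} {a δ : ℕ} :
    (a, δ) ∈ (r.restrict α).lhs ↔ (a, δ) ∈ r.lhs ∧ ((a, some δ) : ℕ × Val) ∉ α := by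
  simp [Rule.restrict]

lemma restrict_empty (r : Rule) : r.restrict ∅ = r := by
  cases r; simp [Rule.restrict]

lemma restrict_len_mono {r : Rule} {α α' : Finset (ℕ × Val)} (h : α ⊆ α') :
    (r.restrict α').len ≤ (r.restrict α).len := by
  apply Finset.card_le_card
  intro ⟨a, δ⟩ hm
  rw [mem_restrict_lhs] at hm ⊢
  exact ⟨hm.1, fun hc => hm.2 (h hc)⟩

lemma mem_sysRestrict {S : Finset Rule} {α : Finset (ℕ × Val)} {r' : Rule} :
    r' ∈ sysRestrict S α ↔ ∃ r ∈ S, Consistent (r.K ∪ α) ∧ r' = r.restrict α := by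
  simp only [sysRestrict, Finset.mem_image, Finset.mem_filter]
  constructor
  · rintro ⟨r, ⟨h1, h2⟩, rfl⟩; exact ⟨r, h1, h2, rfl⟩
  · rintro ⟨r, h1, h2, rfl⟩; exact ⟨r, ⟨h1, h2⟩, rfl⟩

lemma sysRestrict_empty {S : Finset Rule} (hS : ∀ r ∈ S, r.WF) : sysRestrict S ∅ = S := by
  ext r
  rw [mem_sysRestrict]
  constructor
  · rintro ⟨r', hr', _, rfl⟩; rw [restrict_empty]; exact hr'
  · intro hr
    refine ⟨r, hr, ?_, (restrict_empty r).symm⟩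
    rw [Finset.union_empty]
    exact consistent_K_of_WF (hS r hr)

lemma dS_pos_of_round {S : Finset Rule} {α : Finset (ℕ × Val)}
    (h : ∃ r ∈ sysRestrict S α, r.lhs ≠ ∅) : 1 ≤ dS (sysRestrict S α) := by
  obtain ⟨r, hr, hne⟩ := h
  have : 1 ≤ r.len := by
    rw [Rule.len, Nat.one_le_iff_ne_zero, Ne, Finset.card_eq_zero]
    exact hne
  exact le_trans this (Finset.le_sup hr)

end Restrict

section Acc

lemma accAlpha_nil (S : Finset Rule) (f : ℕ → Val) : accAlpha S f [] = ∅ := rfl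

lemma accAlpha_cons (S : Finset Rule) (f : ℕ → Val) (B : Finset ℕ) (Bs : List (Finset ℕ)) :
    accAlpha S f (B :: Bs) = roundEqs S f B ∪ accAlpha S f Bs := rfl

lemma accAlpha_append (S : Finset Rule) (f : ℕ → Val) (l₁ l₂ : List (Finset ℕ)) :
    accAlpha S f (l₁ ++ l₂) = accAlpha S f l₁ ∪ accAlpha S f l₂ := by
  induction l₁ with
  | nil => simp [accAlpha_nil, accAlpha_cons]
  | cons B t ih => rw [List.cons_append, accAlpha_cons, accAlpha_cons, ih, Finset.union_assoc]

lemma roundEqs_subset (S : Finset Rule) (f : ℕ → Val) (B : Finset ℕ) :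
    roundEqs S f B ⊆ KofTuple S f := Finset.filter_subset _ _

lemma accAlpha_subset (S : Finset Rule) (f : ℕ → Val) (Bs : List (Finset ℕ)) :
    accAlpha S f Bs ⊆ KofTuple S f := by
  induction Bs with
  | nil => simp [accAlpha_nil]
  | cons B t ih =>
    rw [accAlpha_cons]
    exact Finset.union_subset (roundEqs_subset S f B) ih

lemma take_succ_concat {α : Type*} (l : List α) (i : Fin l.length) :
    l.take (i + 1) = l.take i ++ [l.get i] := by
  rw [List.take_succ]
  simp [List.getElem?_eq_getElem i.isLt]

lemma roundEqs_card_le (S : Finset Rule) (f : ℕ → Val) (B : Finset ℕ) :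
    (roundEqs S f B).card ≤ B.card := by
  have h : roundEqs S f B ⊆ B.image (fun a => (a, f a)) := by
    intro p hp
    obtain ⟨hK, hB⟩ := Finset.mem_filter.mp hp
    obtain ⟨h1, h2⟩ := mem_KofTuple.mp hK
    apply Finset.mem_image.mpr
    exact ⟨p.1, hB, by rw [Prod.ext_iff]; exact ⟨rfl, h2.symm⟩⟩
  exact le_trans (Finset.card_le_card h) Finset.card_image_le

end Acc
section Decrease

lemma round_decrease {S : Finset Rule} {f : ℕ → Val} {α : Finset (ℕ × Val)} {B : Finset ℕ}
    (hα : α ⊆ KofTuple S f) (hrd : RoundOK S α B) :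
    dS (sysRestrict S (α ∪ roundEqs S f B)) < dS (sysRestrict S α) := by
  obtain ⟨-, hne, M, hM, hcov, -⟩ := hrd
  set d := dS (sysRestrict S α) with hd
  have hd1 : 1 ≤ d := dS_pos_of_round hne
  have hsup : dS (sysRestrict S (α ∪ roundEqs S f B)) ≤ d - 1 := by
    apply Finset.sup_le
    intro r' hr'
    obtain ⟨r, hrS, hcons', rfl⟩ := mem_sysRestrict.mp hr'
    have hsub : α ⊆ α ∪ roundEqs S f B := Finset.subset_union_left
    have hcons : Consistent (r.K ∪ α) := by
      apply consistent_subset _ hcons'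
      exact Finset.union_subset_union_right hsub
    have hmemα : r.restrict α ∈ sysRestrict S α := mem_sysRestrict.mpr ⟨r, hrS, hcons, rfl⟩
    have hlenle : (r.restrict α).len ≤ d := Finset.le_sup hmemα
    rcases Nat.lt_or_ge (r.restrict α).len d with hlt | hge
    · have := restrict_len_mono (r := r) hsub
      omega
    · have hlen : (r.restrict α).len = d := le_antisymm hlenle hge
      obtain ⟨r'', hr''M, hK⟩ := hM.2.1 (r.restrict α) hmemα hlen
      have hlhs : r''.lhs = (r.restrict α).lhs := K_lhs_eq hK
      have hattrs : r''.attrs.Nonempty := by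
        rw [attrs_nonempty_iff, hlhs, ← Finset.nonempty_iff_ne_empty,
          ← Finset.card_pos]
        rw [Rule.len] at hlen
        omega
      obtain ⟨a, ha⟩ := hcov.2 r'' hr''M hattrs
      obtain ⟨haA, haB⟩ := Finset.mem_inter.mp ha
      rw [Rule.attrs, hlhs, ← Rule.attrs] at haA
      obtain ⟨δ, hδ⟩ := mem_attrs.mp haA
      obtain ⟨hδr, hδα⟩ := mem_restrict_lhs.mp hδ
      have haS : a ∈ attrsS S := mem_attrsS hrS (mem_attrs.mpr ⟨δ, hδr⟩)
      have hfa : ((a, f a) : ℕ × Val) ∈ roundEqs S f B :=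
        Finset.mem_filter.mpr ⟨mem_KofTuple.mpr ⟨haS, rfl⟩, haB⟩
      have heq : f a = some δ := by
        have h1 : ((a, some δ) : ℕ × Val) ∈ r.K ∪ (α ∪ roundEqs S f B) :=
          Finset.mem_union_left _ (mem_K.mpr hδr)
        have h2 : ((a, f a) : ℕ × Val) ∈ r.K ∪ (α ∪ roundEqs S f B) :=
          Finset.mem_union_right _ (Finset.mem_union_right _ hfa)
        exact (hcons' _ h2 _ h1 rfl)
      have hmemr : ((a, some δ) : ℕ × Val) ∈ α ∪ roundEqs S f B := by
        rw [← heq]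
        exact Finset.mem_union_right _ hfa
      have hnm : (a, δ) ∉ (r.restrict (α ∪ roundEqs S f B)).lhs := by
        rw [mem_restrict_lhs]
        intro hc
        exact hc.2 hmemr
      have hsub2 : (r.restrict (α ∪ roundEqs S f B)).lhs ⊆ (r.restrict α).lhs.erase (a, δ) := by
        intro p hp
        apply Finset.mem_erase.mpr
        constructor
        · rintro rfl; exact hnm hp
        · rw [mem_restrict_lhs] at hp ⊢
          exact ⟨hp.1, fun hc => hp.2 (hsub hc)⟩
      have := Finset.card_le_card hsub2
      rw [Finset.card_erase_of_mem hδ] at this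
      rw [Rule.len] at hlen ⊢
      omega
  omega

lemma partialRun_prefix_bound {S : Finset Rule} {f : ℕ → Val} (hS : ∀ r ∈ S, r.WF)
    {Bs : List (Finset ℕ)} (h : PartialRun S f Bs) :
    ∀ i, i ≤ Bs.length → dS (sysRestrict S (accAlpha S f (Bs.take i))) + i ≤ dS S := by
  intro i
  induction i with
  | zero =>
    intro _
    simp [accAlpha_nil, sysRestrict_empty hS]
  | succ i ih =>
    intro hle
    have hilt : i < Bs.length := by omega
    have hrd := h ⟨i, hilt⟩
    have hstep := round_decrease (accAlpha_subset S f (Bs.take i)) hrd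
    have hcat : Bs.take (i + 1) = Bs.take i ++ [Bs.get ⟨i, hilt⟩] := take_succ_concat Bs ⟨i, hilt⟩
    have hacc : accAlpha S f (Bs.take (i + 1)) =
        accAlpha S f (Bs.take i) ∪ roundEqs S f (Bs.get ⟨i, hilt⟩) := by
      rw [hcat, accAlpha_append, accAlpha_cons, accAlpha_nil, Finset.union_empty]
  
    rw [hacc]
    have := ih (by omega)
    omega

lemma partialRun_length_le {S : Finset Rule} {f : ℕ → Val} (hS : ∀ r ∈ S, r.WF)
    {Bs : List (Finset ℕ)} (h : PartialRun S f Bs) : Bs.length ≤ dS S := by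
  have := partialRun_prefix_bound hS h Bs.length le_rfl
  omega

end Decrease
section Finish

lemma finished_filter_eq {S : Finset Rule} {f : ℕ → Val} {Bs : List (Finset ℕ)}
    (hFin : Finished S f Bs) :
    S.filter (fun r => Consistent (r.K ∪ accAlpha S f Bs)) =
      S.filter (fun r => Realizable S f r) := by
  set α := accAlpha S f Bs with hα
  have hαsub : α ⊆ KofTuple S f := accAlpha_subset S f Bs
  ext r
  simp only [Finset.mem_filter, and_congr_right_iff]
  intro hrS
  constructor
  · intro hcons
    have hmem : r.restrict α ∈ sysRestrict S α := mem_sysRestrict.mpr ⟨r, hrS, hcons, rfl⟩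
    rcases hFin with hemp | hall
    · rw [hα, hemp] at hmem
      exact absurd hmem (Finset.notMem_empty _)
    · have hl : (r.restrict α).lhs = ∅ := hall _ hmem
      intro p hp
      obtain ⟨δ, hδ, hmemr⟩ := mem_K_elim hp
      have : (p.1, δ) ∉ (r.restrict α).lhs := by rw [hl]; exact Finset.notMem_empty _
      rw [mem_restrict_lhs] at this
      push_neg at this
      have hin : ((p.1, some δ) : ℕ × Val) ∈ α := this hmemr
      have := hαsub hin
      rcases p with ⟨a, w⟩
      simp only at hδ
      rw [hδ]
      exact this
  · intro hreal
    apply consistent_subset _ (consistent_KofTuple S f)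
    exact Finset.union_subset hreal hαsub

end Finish

noncomputable section Trees

def DT.queried (g : ℕ → Val) : DT → Finset ℕ
  | .leaf _ => ∅
  | .node a c => insert a ((c (g a)).queried g)

def DT.pathE (g : ℕ → Val) : DT → Finset (ℕ × Val) → Finset (ℕ × Val)
  | .leaf _, E => E
  | .node a c, E => (c (g a)).pathE g (insert (a, g a) E)

def DT.pathτ (g : ℕ → Val) : DT → Finset Rule
  | .leaf τ => τ
  | .node a c => (c (g a)).pathτ g

def DT.addr (g : ℕ → Val) : DT → List Val
  | .leaf _ => []
  | .node a c => g a :: (c (g a)).addr g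

def DT.addrs (S : Finset Rule) : DT → Finset (List Val)
  | .leaf _ => {[]}
  | .node a c => (EVS S a).attach.biUnion
      (fun v => ((c v.1).addrs S).image (List.cons v.1))

lemma pathE_eq (g : ℕ → Val) (Γ : DT) :
    ∀ E, Γ.pathE g E = E ∪ (Γ.queried g).image (fun a => (a, g a)) := by
  induction Γ with
  | leaf τ => intro E; simp [DT.pathE, DT.queried]
  | node a c ih =>
    intro E
    rw [DT.pathE, DT.queried, ih, Finset.image_insert]
    ext p
    simp only [Finset.mem_union, Finset.mem_insert]
    tauto

lemma queried_card_le {S : Finset Rule} {g : ℕ → Val} (hg : InEV S g) :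
    ∀ Γ : DT, Γ.Over S → (Γ.queried g).card ≤ Γ.depth S := by
  intro Γ
  induction Γ with
  | leaf τ => intro _; simp [DT.queried, DT.depth]
  | node a c ih =>
    intro hO
    have hga : g a ∈ EVS S a := hg a hO.1
    have h1 := ih (g a) (hO.2 (g a) hga)
    have h2 : DT.depth S (c (g a)) ≤ (EVS S a).sup (fun v => DT.depth S (c v)) :=
      Finset.le_sup (f := fun v => DT.depth S (c v)) hga
    calc (DT.queried g (.node a c)).card ≤ ((c (g a)).queried g).card + 1 :=
          Finset.card_insert_le _ _
      _ ≤ DT.depth S (.node a c) := by rw [DT.depth]; omega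

lemma pathE_graph {g : ℕ → Val} :
    ∀ (Γ : DT) (E : Finset (ℕ × Val)), (∀ p ∈ E, p.2 = g p.1) →
      ∀ p ∈ Γ.pathE g E, p.2 = g p.1 := by
  intro Γ
  induction Γ with
  | leaf τ => intro E hE; exact hE
  | node a c ih =>
    intro E hE
    rw [DT.pathE]
    apply ih
    intro p hp
    rcases Finset.mem_insert.mp hp with rfl | hp'
    · rfl
    · exact hE p hp'

lemma solves_path {S : Finset Rule} {g : ℕ → Val} (hg : InEV S g) :
    ∀ (Γ : DT) (E : Finset (ℕ × Val)), Γ.Over S → Γ.SolvesFrom S E →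
      Consistent (Γ.pathE g E) →
      (∀ r ∈ Γ.pathτ g, r.K ⊆ Γ.pathE g E) ∧
        ∀ r ∈ S, r ∉ Γ.pathτ g → ¬ Consistent (r.K ∪ Γ.pathE g E) := by
  intro Γ
  induction Γ with
  | leaf τ => intro E hO hsol hcons; exact hsol hcons
  | node a c ih =>
    intro E hO hsol hcons
    have hga : g a ∈ EVS S a := hg a hO.1
    exact ih (g a) (insert (a, g a) E) (hO.2 (g a) hga) (hsol (g a) hga) hcons

lemma addr_mem_addrs {S : Finset Rule} {g : ℕ → Val} (hg : InEV S g) :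
    ∀ Γ : DT, Γ.Over S → Γ.addr g ∈ Γ.addrs S := by
  intro Γ
  induction Γ with
  | leaf τ => intro _; simp [DT.addr, DT.addrs]
  | node a c ih =>
    intro hO
    have hga : g a ∈ EVS S a := hg a hO.1
    rw [DT.addr, DT.addrs]
    apply Finset.mem_biUnion.mpr
    exact ⟨⟨g a, hga⟩, Finset.mem_attach _ _,
      Finset.mem_image.mpr ⟨(c (g a)).addr g, ih (g a) (hO.2 (g a) hga), rfl⟩⟩

lemma addrs_card_le (S : Finset Rule) : ∀ Γ : DT, (Γ.addrs S).card ≤ Γ.numLeaves S := by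
  intro Γ
  induction Γ with
  | leaf τ => simp [DT.addrs, DT.numLeaves]
  | node a c ih =>
    rw [DT.addrs, DT.numLeaves]
    calc ((EVS S a).attach.biUnion fun v => ((c v.1).addrs S).image (List.cons v.1)).card
        ≤ ∑ v ∈ (EVS S a).attach, (((c v.1).addrs S).image (List.cons v.1)).card :=
          Finset.card_biUnion_le
      _ ≤ ∑ v ∈ (EVS S a).attach, ((c v.1).addrs S).card :=
          Finset.sum_le_sum (fun v _ => Finset.card_image_le)
      _ ≤ ∑ v ∈ (EVS S a).attach, (c v.1).numLeaves S :=
          Finset.sum_le_sum (fun v _ => ih v.1)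
      _ = ∑ v ∈ EVS S a, (c v).numLeaves S := Finset.sum_attach _ (fun v => DT.numLeaves S (c v))

lemma numLeaves_le (S : Finset Rule) :
    ∀ Γ : DT, Γ.Over S → Γ.numLeaves S ≤ (kS S + 1) ^ Γ.depth S := by
  intro Γ
  induction Γ with
  | leaf τ => intro _; simp [DT.numLeaves, DT.depth]
  | node a c ih =>
    intro hO
    rw [DT.numLeaves, DT.depth]
    set s := (EVS S a).sup (fun v => DT.depth S (c v)) with hs
    calc ∑ v ∈ EVS S a, (c v).numLeaves S
        ≤ ∑ v ∈ EVS S a, (kS S + 1) ^ s := by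
          apply Finset.sum_le_sum
          intro v hv
          calc (c v).numLeaves S ≤ (kS S + 1) ^ DT.depth S (c v) := ih v (hO.2 v hv)
            _ ≤ (kS S + 1) ^ s :=
              Nat.pow_le_pow_right (by omega) (Finset.le_sup (f := fun v => DT.depth S (c v)) hv)
      _ = (EVS S a).card * (kS S + 1) ^ s := by rw [Finset.sum_const, smul_eq_mul]
      _ ≤ (kS S + 1) * (kS S + 1) ^ s :=
          Nat.mul_le_mul_right _ (EVS_card_le hO.1)
      _ = (kS S + 1) ^ (1 + s) := by rw [pow_add, pow_one]

lemma pathE_congr {g₁ g₂ : ℕ → Val} :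
    ∀ Γ : DT, Γ.addr g₁ = Γ.addr g₂ → ∀ E, Γ.pathE g₁ E = Γ.pathE g₂ E := by
  intro Γ
  induction Γ with
  | leaf τ => intro _ E; rfl
  | node a c ih =>
    intro h E
    rw [DT.addr, DT.addr, List.cons.injEq] at h
    have h2 := h.2
    rw [← h.1] at h2
    rw [DT.pathE, DT.pathE, ← h.1]
    exact ih (g₁ a) h2 _

end Trees
section TrivialTree

def buildDT (S : Finset Rule) : List ℕ → Finset (ℕ × Val) → DT
  | [], E => .leaf (S.filter (fun r => r.K ⊆ E))
  | a :: t, E => .node a (fun v => buildDT S t (insert (a, v) E))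

lemma buildDT_over (S : Finset Rule) :
    ∀ (L : List ℕ) (E : Finset (ℕ × Val)), (∀ a ∈ L, a ∈ attrsS S) →
      (buildDT S L E).Over S := by
  intro L
  induction L with
  | nil => intro E _; exact Finset.filter_subset _ _
  | cons a t ih =>
    intro E hL
    refine ⟨hL a List.mem_cons_self, fun v _ => ih _ ?_⟩
    intro a' ha'
    exact hL a' (List.mem_cons_of_mem a ha')

lemma buildDT_solves (S : Finset Rule) :
    ∀ (L : List ℕ) (E : Finset (ℕ × Val)),
      (∀ a ∈ attrsS S, a ∈ L ∨ ∃ v, (a, v) ∈ E) →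
      (buildDT S L E).SolvesFrom S E := by
  intro L
  induction L with
  | nil =>
    intro E hinv hcons
    constructor
    · intro r hr
      exact (Finset.mem_filter.mp hr).2
    · intro r hrS hrn hcons'
      apply hrn
      apply Finset.mem_filter.mpr
      refine ⟨hrS, fun p hp => ?_⟩
      obtain ⟨δ, hδ, hmem⟩ := mem_K_elim hp
      have haS : p.1 ∈ attrsS S := mem_attrsS hrS (mem_attrs.mpr ⟨δ, hmem⟩)
      rcases hinv p.1 haS with hL | ⟨v, hv⟩
      · exact absurd hL List.not_mem_nil
      · have : p.2 = v := hcons' p (Finset.mem_union_left _ hp) (p.1, v)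
          (Finset.mem_union_right _ hv) rfl
        have hpe : p = (p.1, v) := Prod.ext rfl this
        rw [hpe]
        exact hv
  | cons a t ih =>
    intro E hinv v _
    apply ih
    intro a' ha'
    rcases hinv a' ha' with hL | ⟨w, hw⟩
    · rcases List.mem_cons.mp hL with rfl | ht
      · exact Or.inr ⟨v, Finset.mem_insert_self _ _⟩
      · exact Or.inl ht
    · exact Or.inr ⟨w, Finset.mem_insert_of_mem hw⟩

lemma hEAR_set_nonempty (S : Finset Rule) :
    {n | ∃ Γ : DT, DT.SolvesEAR S Γ ∧ DT.depth S Γ = n}.Nonempty := by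
  refine ⟨_, buildDT S (attrsS S).toList ∅, ⟨⟨?_, ?_⟩, rfl⟩⟩
  · exact buildDT_over S _ _ (fun a ha => Finset.mem_toList.mp ha)
  · apply buildDT_solves
    intro a ha
    exact Or.inl (Finset.mem_toList.mpr ha)

lemma hEAR_attained (S : Finset Rule) :
    ∃ Γ : DT, DT.SolvesEAR S Γ ∧ DT.depth S Γ = hEAR S :=
  Nat.sInf_mem (hEAR_set_nonempty S)

end TrivialTree

noncomputable section Adversary
open scoped Classical

def rval (r : Rule) (a : ℕ) : Val :=
  if h : ∃ δ, (a, δ) ∈ r.lhs then some h.choose else none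

lemma rval_eq {r : Rule} (hWF : r.WF) {a δ : ℕ} (h : (a, δ) ∈ r.lhs) :
    rval r a = some δ := by
  have he : ∃ δ', (a, δ') ∈ r.lhs := ⟨δ, h⟩
  rw [rval, dif_pos he]
  have := hWF _ he.choose_spec _ h rfl
  rw [Prod.ext_iff] at this
  exact congrArg some this.2

lemma rval_some {r : Rule} {a δ : ℕ} (h : rval r a = some δ) : (a, δ) ∈ r.lhs := by
  rw [rval] at h
  split at h
  · rename_i he
    rw [Option.some.injEq] at h
    rw [← h]
    exact he.choose_spec
  · exact absurd h (by simp)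

lemma rval_valid {S : Finset Rule} {r : Rule} (hmem : ∀ a δ, (a, δ) ∈ r.lhs → δ ∈ VS S a) :
    InEV S (rval r) := by
  intro a _
  rcases h : rval r a with _ | δ
  · exact none_mem_EVS S a
  · exact some_mem_EVS (hmem a δ (rval_some h))

lemma dS_le_depth {S : Finset Rule} (hS : SysWF S) {Γ : DT}
    (hsol : DT.SolvesEAR S Γ) : dS S ≤ Γ.depth S := by
  obtain ⟨r, hrS, hlen⟩ := Finset.exists_mem_eq_sup S hS.1 Rule.len
  set g := rval r with hg
  have hWFr : r.WF := hS.2 r hrS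
  have hgr : ∀ a δ, (a, δ) ∈ r.lhs → g a = some δ := fun a δ h => rval_eq hWFr h
  have hvalid : InEV S g := rval_valid (fun a δ h => mem_VS hrS h)
  set E' := Γ.pathE g ∅ with hE'
  have hgraph : ∀ p ∈ E', p.2 = g p.1 :=
    pathE_graph Γ ∅ (fun p hp => absurd hp (Finset.notMem_empty _))
  have hconsE : Consistent E' := consistent_of_graph hgraph
  obtain ⟨h1, h2⟩ := solves_path hvalid Γ ∅ hsol.1 hsol.2 hconsE
  have hKr : ∀ p ∈ r.K, p.2 = g p.1 := by
    intro p hp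
    obtain ⟨δ, hδ, hmem⟩ := mem_K_elim hp
    rw [hδ, hgr _ _ hmem]
  have hconsu : Consistent (r.K ∪ E') := by
    apply consistent_of_graph (g := g)
    intro p hp
    rcases Finset.mem_union.mp hp with h | h
    · exact hKr p h
    · exact hgraph p h
  have hrτ : r ∈ Γ.pathτ g := by
    by_contra hc
    exact h2 r hrS hc hconsu
  have hsub : r.K ⊆ E' := h1 r hrτ
  calc dS S = r.K.card := by rw [K_card]; exact hlen
    _ ≤ E'.card := Finset.card_le_card hsub
    _ ≤ (Γ.queried g).card := by
        rw [hE', pathE_eq]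
        calc (∅ ∪ (Γ.queried g).image (fun a => (a, g a))).card
            = ((Γ.queried g).image (fun a => (a, g a))).card := by rw [Finset.empty_union]
          _ ≤ (Γ.queried g).card := Finset.card_image_le
    _ ≤ Γ.depth S := queried_card_le hvalid Γ hsol.1

lemma dS_le_hEAR {S : Finset Rule} (hS : SysWF S) : dS S ≤ hEAR S := by
  apply le_csInf (hEAR_set_nonempty S)
  rintro n ⟨Γ, hsol, rfl⟩
  exact dS_le_depth hS hsol

end Adversary
section RoundBounds
open scoped Classical

lemma round_beta_le {S : Finset Rule} {f : ℕ → Val} {α : Finset (ℕ × Val)}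
    (hWF : ∀ r ∈ S, r.WF) (hf : InEV S f) (hα : α ⊆ KofTuple S f)
    {M : Finset Rule} (hM : IsMaxSet (sysRestrict S α) M)
    {Γ : DT} (hO : Γ.Over S) (hsol : Γ.SolvesFrom S ∅) :
    betaS M ≤ Γ.depth S := by
  set g : ℕ → Val := fun a => if ((a, f a) : ℕ × Val) ∈ α then f a else none with hg
  have hvalid : InEV S g := by
    intro a ha
    by_cases h : ((a, f a) : ℕ × Val) ∈ α
    · simpa [hg, h] using hf a ha
    · simp [hg, h, none_mem_EVS]
  set E' := Γ.pathE g ∅ with hE'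
  have hgraph : ∀ p ∈ E', p.2 = g p.1 := pathE_graph Γ ∅ (by simp)
  have hconsE' : Consistent E' := consistent_of_graph hgraph
  obtain ⟨h1, h2⟩ := solves_path hvalid Γ ∅ hO hsol hconsE'
  have hE'q : ∀ p ∈ E', p.1 ∈ Γ.queried g := by
    intro p hp
    rw [hE', pathE_eq, Finset.empty_union] at hp
    obtain ⟨a, ha, he⟩ := Finset.mem_image.mp hp
    rw [← he]; exact ha
  set B := Γ.queried g ∩ attrsS M with hB
  have hcover : IsNodeCover M B := by
    constructor
    · exact Finset.inter_subset_right
    · intro r'' hr'' hattrs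
      by_contra hemp
      rw [Finset.not_nonempty_iff_eq_empty] at hemp
      have hnq : ∀ a ∈ r''.attrs, a ∉ Γ.queried g := by
        intro a haA haq
        have haM : a ∈ attrsS M := mem_attrsS hr'' haA
        have : a ∈ r''.attrs ∩ B :=
          Finset.mem_inter.mpr ⟨haA, Finset.mem_inter.mpr ⟨haq, haM⟩⟩
        rw [hemp] at this
        exact Finset.notMem_empty a this
      obtain ⟨r, hrS, hconsα, hre⟩ := mem_sysRestrict.mp ((hM.1 r'' hr'').1)
      have hcross : ∀ p ∈ r.K, ∀ q ∈ E', p.1 = q.1 → p.2 = q.2 := by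
        intro p hp q hq heq
        obtain ⟨δ, hδ2, hmem⟩ := mem_K_elim hp
        have hq2 : q.2 = g q.1 := hgraph q hq
        by_cases hcase : ((q.1, f q.1) : ℕ × Val) ∈ α
        · have hpf : p.2 = f q.1 := hconsα p (Finset.mem_union_left _ hp) (q.1, f q.1)
            (Finset.mem_union_right _ hcase) heq
          rw [hpf, hq2, hg]
          simp [hcase]
        · exfalso
          have hnα : ((p.1, some δ) : ℕ × Val) ∉ α := by
            intro hc
            have hm := mem_KofTuple.mp (hα hc)
            apply hcase
            rw [← heq, ← hm.2]
            exact hc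
          have hmem'' : (p.1, δ) ∈ r''.lhs := by
            rw [hre, mem_restrict_lhs]
            exact ⟨hmem, hnα⟩
          exact hnq p.1 (mem_attrs.mpr ⟨δ, hmem''⟩) (by rw [heq]; exact hE'q q hq)
      have hconsu : Consistent (r.K ∪ E') := by
        intro p hp q hq heq
        rcases Finset.mem_union.mp hp with hp' | hp' <;>
          rcases Finset.mem_union.mp hq with hq' | hq'
        · exact consistent_K_of_WF (hWF r hrS) p hp' q hq' heq
        · exact hcross p hp' q hq' heq
        · exact (hcross q hq' p hp' heq.symm).symm
        · exact hconsE' p hp' q hq' heq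
      have hrτ : r ∈ Γ.pathτ g := by
        by_contra hc
        exact h2 r hrS hc hconsu
      have hsub : r.K ⊆ E' := h1 r hrτ
      obtain ⟨a, haA⟩ := hattrs
      obtain ⟨δ, hmem''⟩ := mem_attrs.mp haA
      have hmemr : (a, δ) ∈ r.lhs := by
        rw [hre] at hmem''
        exact restrict_lhs_subset r α hmem''
      have hmE : ((a, some δ) : ℕ × Val) ∈ E' := hsub (mem_K.mpr hmemr)
      exact hnq a haA (hE'q _ hmE)
  calc betaS M ≤ B.card := Nat.sInf_le ⟨B, hcover, rfl⟩
    _ ≤ (Γ.queried g).card := Finset.card_le_card Finset.inter_subset_left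
    _ ≤ Γ.depth S := queried_card_le hvalid Γ hO

lemma round_M_card_le {S : Finset Rule} {f : ℕ → Val} {α : Finset (ℕ × Val)}
    (hWF : ∀ r ∈ S, r.WF) (hf : InEV S f) (hα : α ⊆ KofTuple S f)
    {M : Finset Rule} (hM : IsMaxSet (sysRestrict S α) M)
    {Γ : DT} (hO : Γ.Over S) (hsol : Γ.SolvesFrom S ∅) :
    M.card ≤ (kS S + 1) ^ Γ.depth S := by
  set gr : Rule → ℕ → Val :=
    fun r'' a => if ((a, f a) : ℕ × Val) ∈ α then f a else rval r'' a with hgrdef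
  have hvalid : ∀ r'' ∈ M, InEV S (gr r'') := by
    intro r'' hr'' a ha
    obtain ⟨r, hrS, hconsα, hre⟩ := mem_sysRestrict.mp ((hM.1 r'' hr'').1)
    by_cases h : ((a, f a) : ℕ × Val) ∈ α
    · simpa [hgrdef, h] using hf a ha
    · simp only [hgrdef, if_neg h]
      rcases hrv : rval r'' a with _ | δ
      · exact none_mem_EVS S a
      · have hmm : (a, δ) ∈ r''.lhs := rval_some hrv
        rw [hre] at hmm
        exact some_mem_EVS (mem_VS hrS (restrict_lhs_subset r α hmm))
  have hkey : ∀ r'' ∈ M, r''.K =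
      (Γ.pathE (gr r'') ∅).filter
        (fun p => p.2 ≠ none ∧ ((p.1, f p.1) : ℕ × Val) ∉ α) := by
    intro r'' hr''
    obtain ⟨r, hrS, hconsα, hre⟩ := mem_sysRestrict.mp ((hM.1 r'' hr'').1)
    have hWFr : r.WF := hWF r hrS
    have hWFr'' : r''.WF := by rw [hre]; exact restrict_WF hWFr α
    set g := gr r'' with hgdef
    set E' := Γ.pathE g ∅ with hE'
    have hgraph : ∀ p ∈ E', p.2 = g p.1 := pathE_graph Γ ∅ (by simp)
    have hconsE' : Consistent E' := consistent_of_graph hgraph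
    obtain ⟨h1, h2⟩ := solves_path (hvalid r'' hr'') Γ ∅ hO hsol hconsE'
    -- the survived equations never collide with α's f-values
    have hnotα : ∀ {a δ : ℕ}, (a, δ) ∈ r''.lhs → ((a, f a) : ℕ × Val) ∉ α := by
      intro a δ hmm hc
      have hmr : ((a, some δ) : ℕ × Val) ∉ α := by
        rw [hre, mem_restrict_lhs] at hmm
        exact hmm.2
      have : (some δ : Val) = f a := hconsα (a, some δ)
        (Finset.mem_union_left _ (mem_K.mpr (by
          rw [hre] at hmm
          exact restrict_lhs_subset r α hmm)))
        (a, f a) (Finset.mem_union_right _ hc) rfl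
      apply hmr
      rw [this]
      exact hc
    have hcross : ∀ p ∈ r.K, ∀ q ∈ E', p.1 = q.1 → p.2 = q.2 := by
      intro p hp q hq heq
      obtain ⟨δ, hδ2, hmem⟩ := mem_K_elim hp
      have hq2 : q.2 = g q.1 := hgraph q hq
      by_cases hcase : ((q.1, f q.1) : ℕ × Val) ∈ α
      · have hpf : p.2 = f q.1 := hconsα p (Finset.mem_union_left _ hp) (q.1, f q.1)
          (Finset.mem_union_right _ hcase) heq
        rw [hpf, hq2, hgdef, hgrdef]
        simp [hcase]
      · have hnα : ((p.1, some δ) : ℕ × Val) ∉ α := by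
          intro hc
          have hm := mem_KofTuple.mp (hα hc)
          apply hcase
          rw [← heq, ← hm.2]
          exact hc
        have hmem'' : (p.1, δ) ∈ r''.lhs := by
          rw [hre, mem_restrict_lhs]
          exact ⟨hmem, hnα⟩
        have : g q.1 = some δ := by
          rw [hgdef, hgrdef]
          simp only [← heq, if_neg (hnotα hmem'')]
          exact rval_eq hWFr'' hmem''
        rw [hq2, this, hδ2]
    have hconsu : Consistent (r.K ∪ E') := by
      intro p hp q hq heq
      rcases Finset.mem_union.mp hp with hp' | hp' <;>
        rcases Finset.mem_union.mp hq with hq' | hq'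
      · exact consistent_K_of_WF hWFr p hp' q hq' heq
      · exact hcross p hp' q hq' heq
      · exact (hcross q hq' p hp' heq.symm).symm
      · exact hconsE' p hp' q hq' heq
    have hrτ : r ∈ Γ.pathτ g := by
      by_contra hc
      exact h2 r hrS hc hconsu
    have hsub : r.K ⊆ E' := h1 r hrτ
    -- now prove the set equality
    ext p
    simp only [Finset.mem_filter]
    constructor
    · intro hp
      obtain ⟨δ, hδ2, hmem''⟩ := mem_K_elim hp
      have hmemr : (p.1, δ) ∈ r.lhs := by
        rw [hre] at hmem''
        exact restrict_lhs_subset r α hmem''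
      refine ⟨?_, by rw [hδ2]; simp, ?_⟩
      · have : ((p.1, some δ) : ℕ × Val) ∈ E' := hsub (mem_K.mpr hmemr)
        have hpe : p = (p.1, some δ) := Prod.ext rfl hδ2
        rw [hpe]; exact this
      · exact hnotα hmem''
    · rintro ⟨hpE, hp2, hpα⟩
      have hpg : p.2 = g p.1 := hgraph p hpE
      rw [hgdef, hgrdef] at hpg
      simp only [if_neg hpα] at hpg
      rcases hx : p.2 with _ | δ
      · exact absurd hx hp2
      · have : rval r'' p.1 = some δ := by rw [← hpg, hx]
        have hmm := rval_some this
        have hpe : p = (p.1, some δ) := Prod.ext rfl hx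
        rw [hpe]
        exact mem_K.mpr hmm
  have hinj : Set.InjOn (fun r'' => Γ.addr (gr r'')) ↑M := by
    intro r1 h1m r2 h2m heq
    have hEeq := pathE_congr Γ heq ∅
    have hK : r1.K = r2.K := by
      rw [hkey r1 h1m, hkey r2 h2m, hEeq]
    exact hM.2.2 r1 h1m r2 h2m hK
  calc M.card = (M.image (fun r'' => Γ.addr (gr r''))).card :=
        (Finset.card_image_of_injOn hinj).symm
    _ ≤ (Γ.addrs S).card := by
        apply Finset.card_le_card
        intro x hx
        obtain ⟨r'', hr'', rfl⟩ := Finset.mem_image.mp hx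
        exact addr_mem_addrs (hvalid r'' hr'') Γ hO
    _ ≤ Γ.numLeaves S := addrs_card_le S Γ
    _ ≤ (kS S + 1) ^ Γ.depth S := numLeaves_le S Γ hO

end RoundBounds
section Cover
open scoped Classical

lemma attrsS_mono {M M' : Finset Rule} (h : M' ⊆ M) : attrsS M' ⊆ attrsS M := by
  intro a ha
  obtain ⟨r, hr, har⟩ := Finset.mem_biUnion.mp ha
  exact Finset.mem_biUnion.mpr ⟨r, h hr, har⟩

lemma exists_greedy_cover_aux (c : ℕ) (hc : 1 ≤ c) :
    ∀ m : ℕ, ∀ M : Finset Rule, M.card = m → (∀ r ∈ M, r.attrs.Nonempty) →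
    ∀ C : Finset ℕ, IsNodeCover M C → C.card ≤ c →
    ∃ B : Finset ℕ, IsNodeCover M B ∧ (B.card : ℝ) ≤ c * Real.log m + 1 := by
  intro m
  induction m using Nat.strong_induction_on with
  | _ m ih =>
    intro M hcard hattrs C hC hCc
    rcases Nat.eq_zero_or_pos m with rfl | hm
    · refine ⟨∅, ⟨Finset.empty_subset _, ?_⟩, ?_⟩
      · intro r hr _
        rw [Finset.card_eq_zero] at hcard
        rw [hcard] at hr
        exact absurd hr (Finset.notMem_empty _)
      · simp
    · have hMne : M.Nonempty := by rw [← Finset.card_pos, hcard]; exact hm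
      have hCne : C.Nonempty := by
        obtain ⟨r, hr⟩ := hMne
        obtain ⟨a, ha⟩ := hC.2 r hr (hattrs r hr)
        exact ⟨a, (Finset.mem_inter.mp ha).2⟩
      have hcovd : ∀ b : ℕ, ∃ k, k = (M.filter (fun r => b ∈ r.attrs)).card :=
        fun b => ⟨_, rfl⟩
      set cov : ℕ → ℕ := fun b => (M.filter (fun r => b ∈ r.attrs)).card with hcov
      obtain ⟨a, haC, hamax⟩ := Finset.exists_max_image C cov hCne
      have htotal : m ≤ c * cov a := by
        have hsub : M ⊆ C.biUnion (fun b => M.filter (fun r => b ∈ r.attrs)) := by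
          intro r hr
          obtain ⟨b, hb⟩ := hC.2 r hr (hattrs r hr)
          obtain ⟨hb1, hb2⟩ := Finset.mem_inter.mp hb
          exact Finset.mem_biUnion.mpr ⟨b, hb2, Finset.mem_filter.mpr ⟨hr, hb1⟩⟩
        calc m = M.card := hcard.symm
          _ ≤ (C.biUnion (fun b => M.filter (fun r => b ∈ r.attrs))).card :=
              Finset.card_le_card hsub
          _ ≤ ∑ b ∈ C, cov b := Finset.card_biUnion_le
          _ ≤ ∑ _b ∈ C, cov a := Finset.sum_le_sum (fun b hb => hamax b hb)
          _ = C.card * cov a := by rw [Finset.sum_const, smul_eq_mul]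
          _ ≤ c * cov a := Nat.mul_le_mul_right _ hCc
      have hcova_pos : 1 ≤ cov a := by
        rcases Nat.eq_zero_or_pos (cov a) with hz | h
        · rw [hz] at htotal; omega
        · exact h
      set M' := M.filter (fun r => a ∉ r.attrs) with hM'
      have hM'card : cov a + M'.card = m := by
        rw [← hcard]
        exact Finset.card_filter_add_card_filter_not (s := M)
          (p := fun r => a ∈ r.attrs)
      have hM'lt : M'.card < m := by omega
      have hattrs' : ∀ r ∈ M', r.attrs.Nonempty :=
        fun r hr => hattrs r (Finset.filter_subset _ _ hr)
      have hC' : IsNodeCover M' (C ∩ attrsS M') := by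
        constructor
        · exact Finset.inter_subset_right
        · intro r hr hne
          obtain ⟨b, hb⟩ := hC.2 r (Finset.filter_subset _ _ hr) hne
          obtain ⟨hb1, hb2⟩ := Finset.mem_inter.mp hb
          have hbM' : b ∈ attrsS M' := mem_attrsS hr hb1
          exact ⟨b, Finset.mem_inter.mpr ⟨hb1, Finset.mem_inter.mpr ⟨hb2, hbM'⟩⟩⟩
      obtain ⟨B', hB', hB'card⟩ := ih M'.card hM'lt M' rfl hattrs' _ hC'
        (le_trans (Finset.card_le_card Finset.inter_subset_left) hCc)
      have haM : a ∈ attrsS M := hC.1 haC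
      have hmpos : (1 : ℝ) ≤ (m : ℝ) := by exact_mod_cast hm
      have hlogm : 0 ≤ Real.log m := Real.log_nonneg hmpos
      rcases Nat.eq_zero_or_pos M'.card with hz | hpos
      · refine ⟨{a}, ⟨Finset.singleton_subset_iff.mpr haM, ?_⟩, ?_⟩
        · intro r hr hne
          by_cases hcase : a ∈ r.attrs
          · exact ⟨a, Finset.mem_inter.mpr ⟨hcase, Finset.mem_singleton_self a⟩⟩
          · exfalso
            have hrM' : r ∈ M' := Finset.mem_filter.mpr ⟨hr, hcase⟩
            rw [Finset.card_eq_zero] at hz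
            rw [hz] at hrM'
            exact Finset.notMem_empty r hrM'
        · simp only [Finset.card_singleton, Nat.cast_one]
          have hp : (0:ℝ) ≤ (c:ℝ) * Real.log m := by positivity
          linarith
      · refine ⟨insert a B', ⟨?_, ?_⟩, ?_⟩
        · apply Finset.insert_subset haM
          exact le_trans hB'.1 (attrsS_mono (Finset.filter_subset _ _))
        · intro r hr hne
          by_cases hcase : a ∈ r.attrs
          · exact ⟨a, Finset.mem_inter.mpr ⟨hcase, Finset.mem_insert_self a B'⟩⟩
          · have hrM' : r ∈ M' := Finset.mem_filter.mpr ⟨hr, hcase⟩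
            obtain ⟨b, hb⟩ := hB'.2 r hrM' hne
            obtain ⟨hb1, hb2⟩ := Finset.mem_inter.mp hb
            exact ⟨b, Finset.mem_inter.mpr ⟨hb1, Finset.mem_insert_of_mem hb2⟩⟩
        · have hcardins : ((insert a B').card : ℝ) ≤ (B'.card : ℝ) + 1 := by
            exact_mod_cast Finset.card_insert_le a B'
          have hcr1 : (1:ℝ) ≤ (c:ℝ) := by exact_mod_cast hc
          have hcrpos : (0:ℝ) < (c:ℝ) := by linarith
          have hm'1 : (1:ℝ) ≤ (M'.card:ℝ) := by exact_mod_cast hpos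
          have htotalr : (m:ℝ) ≤ (c:ℝ) * (cov a : ℝ) := by exact_mod_cast htotal
          have hsplit : ((cov a : ℕ) : ℝ) + (M'.card:ℝ) = (m:ℝ) := by exact_mod_cast hM'card
          have hm'le : (M'.card:ℝ) ≤ (m:ℝ) * (1 - 1/(c:ℝ)) := by
            have h1 : (m:ℝ) / (c:ℝ) ≤ (cov a : ℝ) := by
              rw [div_le_iff₀ hcrpos]
              nlinarith
            have h2 : (m:ℝ) * (1 - 1/(c:ℝ)) = (m:ℝ) - (m:ℝ) / (c:ℝ) := by
              field_simp
            rw [h2]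
            linarith
          have hfac_pos : (0:ℝ) < 1 - 1/(c:ℝ) := by
            rcases le_or_gt (1 - 1/(c:ℝ)) 0 with h | h
            · exfalso
              have hmr0 : (0:ℝ) < (m:ℝ) := by linarith
              nlinarith
            · exact h
          have hlog1 : Real.log (M'.card:ℝ) ≤ Real.log (m:ℝ) + Real.log (1 - 1/(c:ℝ)) := by
            calc Real.log (M'.card:ℝ) ≤ Real.log ((m:ℝ) * (1 - 1/(c:ℝ))) :=
                Real.log_le_log (by linarith) hm'le
              _ = Real.log (m:ℝ) + Real.log (1 - 1/(c:ℝ)) :=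
                Real.log_mul (by linarith) (by linarith)
          have hlog2 : Real.log (1 - 1/(c:ℝ)) ≤ -(1/(c:ℝ)) := by
            have hx := Real.log_le_sub_one_of_pos hfac_pos
            linarith
          have hkey : (c:ℝ) * Real.log (M'.card:ℝ) + 1 ≤ (c:ℝ) * Real.log (m:ℝ) := by
            have h3 : Real.log (M'.card:ℝ) ≤ Real.log (m:ℝ) - 1/(c:ℝ) := by linarith
            have h4 : (c:ℝ) * Real.log (M'.card:ℝ) ≤ (c:ℝ) * (Real.log (m:ℝ) - 1/(c:ℝ)) :=
              mul_le_mul_of_nonneg_left h3 (le_of_lt hcrpos)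
            have h5 : (c:ℝ) * (Real.log (m:ℝ) - 1/(c:ℝ)) = (c:ℝ) * Real.log (m:ℝ) - 1 := by
              field_simp
            linarith
          calc ((insert a B').card : ℝ) ≤ (B'.card : ℝ) + 1 := hcardins
            _ ≤ ((c:ℝ) * Real.log (M'.card:ℝ) + 1) + 1 := by linarith
            _ ≤ (c:ℝ) * Real.log (m:ℝ) + 1 := by linarith

lemma exists_good_cover {M : Finset Rule} (hMne : M.Nonempty)
    (hattrs : ∀ r ∈ M, r.attrs.Nonempty) :
    ∃ B : Finset ℕ, IsNodeCover M B ∧ (B.card : ℝ) ≤ (betaS M : ℝ) * Real.log M.card + 1 := by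
  have hfull : IsNodeCover M (attrsS M) := by
    refine ⟨le_refl _, fun r hr hne => ?_⟩
    obtain ⟨a, ha⟩ := hne
    exact ⟨a, Finset.mem_inter.mpr ⟨ha, mem_attrsS hr ha⟩⟩
  have hne : {k | ∃ B : Finset ℕ, IsNodeCover M B ∧ B.card = k}.Nonempty :=
    ⟨(attrsS M).card, attrsS M, hfull, rfl⟩
  obtain ⟨C, hCcov, hCcard⟩ := Nat.sInf_mem hne
  have hCb : C.card = betaS M := hCcard
  have hbpos : 1 ≤ betaS M := by
    rw [← hCb]
    rw [Nat.one_le_iff_ne_zero, Ne, Finset.card_eq_zero]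
    intro hCe
    obtain ⟨r, hr⟩ := hMne
    obtain ⟨a, ha⟩ := hCcov.2 r hr (hattrs r hr)
    rw [hCe] at ha
    simp at ha
  exact exists_greedy_cover_aux (betaS M) hbpos M.card M rfl hattrs C hCcov (le_of_eq hCb)

end Cover

section MaxSet
open scoped Classical

lemma exists_maxSet (T : Finset Rule) : ∃ M, IsMaxSet T M := by
  refine ⟨T.filter (fun r => r.len = dS T ∧ ∀ r' ∈ T, r'.K = r.K → r.rhs ≤ r'.rhs),
    ?_, ?_, ?_⟩
  · intro r hr
    have := Finset.mem_filter.mp hr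
    exact ⟨this.1, this.2.1⟩
  · intro r hr hlen
    have hCne : (T.filter (fun r' => r'.K = r.K)).Nonempty :=
      ⟨r, Finset.mem_filter.mpr ⟨hr, rfl⟩⟩
    obtain ⟨r₀, hr₀, hmin⟩ := Finset.exists_min_image _ Rule.rhs hCne
    obtain ⟨hr₀T, hr₀K⟩ := Finset.mem_filter.mp hr₀
    have hlen₀ : r₀.len = dS T := by
      rw [Rule.len, K_lhs_eq hr₀K, ← Rule.len, hlen]
    refine ⟨r₀, Finset.mem_filter.mpr ⟨hr₀T, hlen₀, ?_⟩, hr₀K⟩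
    intro r' hr' hK'
    exact hmin r' (Finset.mem_filter.mpr ⟨hr', by rw [hK', hr₀K]⟩)
  · intro r₁ h₁ r₂ h₂ hK
    obtain ⟨h₁T, _, h₁min⟩ := Finset.mem_filter.mp h₁
    obtain ⟨h₂T, _, h₂min⟩ := Finset.mem_filter.mp h₂
    have hlhs := K_lhs_eq hK
    have hle₁ : r₁.rhs ≤ r₂.rhs := h₁min r₂ h₂T hK.symm
    have hle₂ : r₂.rhs ≤ r₁.rhs := h₂min r₁ h₁T hK
    cases r₁; cases r₂
    simp only at hlhs hle₁ hle₂ ⊢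
    simp only [Rule.mk.injEq]
    exact ⟨hlhs, le_antisymm hle₁ hle₂⟩

lemma maxSet_attrs_nonempty {T M : Finset Rule} (hM : IsMaxSet T M)
    (hd : 1 ≤ dS T) : ∀ r ∈ M, r.attrs.Nonempty := by
  intro r hr
  have hlen := (hM.1 r hr).2
  rw [attrs_nonempty_iff, ← Finset.nonempty_iff_ne_empty, ← Finset.card_pos, ← Rule.len, hlen]
  omega

lemma maxSet_nonempty {T M : Finset Rule} (hT : T.Nonempty) (hM : IsMaxSet T M) :
    M.Nonempty := by
  obtain ⟨r, hr, hlen⟩ := Finset.exists_mem_eq_sup T hT Rule.len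
  obtain ⟨r', hr', _⟩ := hM.2.1 r hr hlen.symm
  exact ⟨r', hr'⟩

lemma roundOK_exists {S : Finset Rule} {α : Finset (ℕ × Val)}
    (hne : (sysRestrict S α).Nonempty) (hr : ∃ r ∈ sysRestrict S α, r.lhs ≠ ∅) :
    ∃ B, RoundOK S α B := by
  obtain ⟨M, hM⟩ := exists_maxSet (sysRestrict S α)
  have hd : 1 ≤ dS (sysRestrict S α) := dS_pos_of_round hr
  have hattrs := maxSet_attrs_nonempty hM hd
  have hMne := maxSet_nonempty hne hM
  obtain ⟨B, hcov, hcard⟩ := exists_good_cover hMne hattrs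
  exact ⟨B, hne, hr, M, hM, hcov, hcard⟩

end MaxSet
section RunExists

lemma partialRun_append {S : Finset Rule} {f : ℕ → Val} {Bs : List (Finset ℕ)} {B : Finset ℕ}
    (h : PartialRun S f Bs) (hB : RoundOK S (accAlpha S f Bs) B) :
    PartialRun S f (Bs ++ [B]) := by
  intro i
  rcases Nat.lt_or_ge i.1 Bs.length with hlt | hge
  · have htake : (Bs ++ [B]).take i.1 = Bs.take i.1 :=
      List.take_append_of_le_length (le_of_lt hlt)
    have hget : (Bs ++ [B]).get i = Bs.get ⟨i.1, hlt⟩ := by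
      simp only [List.get_eq_getElem]
      exact List.getElem_append_left hlt
    rw [htake, hget]
    exact h ⟨i.1, hlt⟩
  · have hi : i.1 = Bs.length := by
      have := i.2
      simp only [List.length_append, List.length_singleton] at this
      omega
    have htake : (Bs ++ [B]).take i.1 = Bs := by
      rw [hi]
      exact List.take_left
    have hget : (Bs ++ [B]).get i = B := by
      simp only [List.get_eq_getElem]
      have : (Bs ++ [B])[i.1] = (Bs ++ [B])[Bs.length]'(by simp) := by
        congr 1
      rw [this]
      exact List.getElem_concat_length rfl (by simp)
    rw [htake, hget]
    exact hB

lemma not_finished {S : Finset Rule} {f : ℕ → Val} {Bs : List (Finset ℕ)}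
    (h : ¬ Finished S f Bs) :
    (sysRestrict S (accAlpha S f Bs)).Nonempty ∧
      ∃ r ∈ sysRestrict S (accAlpha S f Bs), r.lhs ≠ ∅ := by
  rw [Finished] at h
  push_neg at h
  obtain ⟨r, hr, hne⟩ := h.2
  exact ⟨h.1, r, hr, Finset.nonempty_iff_ne_empty.mp hne⟩

lemma exists_finished (S : Finset Rule) (f : ℕ → Val) :
    ∀ n : ℕ, ∀ Bs : List (Finset ℕ), PartialRun S f Bs →
      dS (sysRestrict S (accAlpha S f Bs)) ≤ n →
      ∃ Bs', PartialRun S f Bs' ∧ Finished S f Bs' := by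
  intro n
  induction n with
  | zero =>
    intro Bs hrun hd
    by_cases hfin : Finished S f Bs
    · exact ⟨Bs, hrun, hfin⟩
    · exfalso
      have := dS_pos_of_round (not_finished hfin).2
      omega
  | succ n ih =>
    intro Bs hrun hd
    by_cases hfin : Finished S f Bs
    · exact ⟨Bs, hrun, hfin⟩
    · obtain ⟨hne, hex⟩ := not_finished hfin
      obtain ⟨B, hB⟩ := roundOK_exists hne hex
      have hrun' := partialRun_append hrun hB
      apply ih (Bs ++ [B]) hrun'
      have hdec := round_decrease (accAlpha_subset S f Bs) hB
      have hacc : accAlpha S f (Bs ++ [B]) = accAlpha S f Bs ∪ roundEqs S f B := by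
        rw [accAlpha_append, accAlpha_cons, accAlpha_nil, Finset.union_empty]
      rw [hacc]
      omega

end RunExists
/-- Theorem 1. Let `S` be a decision rule system with `n(S) > 0` and
`δ̄ ∈ EV(S)`. Consider the round-based process: set `α := ∅`; while
`S_α ≠ ∅` and some rule of `S_α` has nonempty left-hand side, choose any node
cover `B` of `G((S_α)^max)` with `|B| ≤ β((S_α)^max) · ln |(S_α)^max| + 1`
and replace `α` by `α ∪ {a = δ : a ∈ B, (a = δ) ∈ K(S, δ̄)}`. Then:
(i) the process terminates after at most `d(S) ≤ h_EAR(S)` rounds (every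
partial run has length at most `d(S)`, and some complete run exists);
(ii) the total number of equations added over all rounds is at most
`h_EAR(S)³ · ln (k(S) + 1) + h_EAR(S)`;
(iii) upon termination, `{r ∈ S : K(r) ∪ α is consistent}` equals the set of
rules of `S` realizable for `δ̄`.
In particular, this process describes the work of a decision tree `Γ` over
`S` that solves the problem `EAR(S)` and satisfies
`h(Γ) ≤ h_EAR(S)³ · ln (k(S) + 1) + h_EAR(S)`. -/
theorem greedy_process (S : Finset Rule) (hS : SysWF S) (hn : 0 < nS S)
    (f : ℕ → Val) (hf : InEV S f) :
    (∀ Bs : List (Finset ℕ), PartialRun S f Bs → Bs.length ≤ dS S) ∧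
    dS S ≤ hEAR S ∧
    (∃ Bs : List (Finset ℕ), PartialRun S f Bs ∧ Finished S f Bs) ∧
    (∀ Bs : List (Finset ℕ), PartialRun S f Bs → Finished S f Bs →
      (((Bs.map (fun B => (roundEqs S f B).card)).sum : ℝ) ≤
        (hEAR S : ℝ) ^ 3 * Real.log (kS S + 1) + (hEAR S : ℝ)) ∧
      S.filter (fun r => Consistent (r.K ∪ accAlpha S f Bs)) =
        S.filter (fun r => Realizable S f r)) ∧
    (∃ Γ : DT, Γ.SolvesEAR S ∧
      (Γ.depth S : ℝ) ≤ (hEAR S : ℝ) ^ 3 * Real.log (kS S + 1) + (hEAR S : ℝ)) := by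
  classical
  have hWF := hS.2
  obtain ⟨Γ0, hΓ0, hΓ0d⟩ := hEAR_attained S
  have hdle : dS S ≤ hEAR S := dS_le_hEAR hS
  have h0 : (0:ℝ) ≤ (hEAR S : ℝ) := Nat.cast_nonneg _
  have hlogk : 0 ≤ Real.log ((kS S : ℝ) + 1) := Real.log_nonneg (by have := Nat.cast_nonneg (α := ℝ) (kS S); linarith)
  have hterm : ∀ (Bs : List (Finset ℕ)), PartialRun S f Bs → ∀ i : Fin Bs.length,
      ((roundEqs S f (Bs.get i)).card : ℝ) ≤
        ((hEAR S : ℝ))^2 * Real.log ((kS S : ℝ) + 1) + 1 := by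
    intro Bs hrun i
    obtain ⟨hne, hex, M, hM, hcov, hbound⟩ := hrun i
    have hαsub : accAlpha S f (Bs.take i.1) ⊆ KofTuple S f := accAlpha_subset S f _
    have hβ : (betaS M : ℝ) ≤ (hEAR S : ℝ) := by
      have hb := round_beta_le hWF hf hαsub hM hΓ0.1 hΓ0.2
      rw [hΓ0d] at hb
      exact_mod_cast hb
    have hMcard : (M.card : ℝ) ≤ ((kS S : ℝ) + 1) ^ (hEAR S) := by
      have hm := round_M_card_le hWF hf hαsub hM hΓ0.1 hΓ0.2
      rw [hΓ0d] at hm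
      calc (M.card:ℝ) ≤ ((kS S + 1 : ℕ) : ℝ) ^ (hEAR S) := by exact_mod_cast hm
        _ = ((kS S : ℝ) + 1) ^ (hEAR S) := by push_cast; ring
    have hM1 : (1:ℝ) ≤ (M.card : ℝ) := by
      have hmn := maxSet_nonempty hne hM
      exact_mod_cast Finset.card_pos.mpr hmn
    have hlogM : Real.log (M.card : ℝ) ≤ (hEAR S : ℝ) * Real.log ((kS S:ℝ)+1) := by
      calc Real.log (M.card:ℝ) ≤ Real.log (((kS S:ℝ)+1) ^ hEAR S) :=
          Real.log_le_log (by linarith) hMcard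
        _ = (hEAR S : ℝ) * Real.log ((kS S:ℝ)+1) := by rw [Real.log_pow]
    have hlogM0 : 0 ≤ Real.log (M.card : ℝ) := Real.log_nonneg hM1
    have hcardle : ((roundEqs S f (Bs.get i)).card : ℝ) ≤ ((Bs.get i).card : ℝ) := by
      exact_mod_cast roundEqs_card_le S f (Bs.get i)
    have hmul : (betaS M : ℝ) * Real.log (M.card : ℝ) ≤
        (hEAR S:ℝ) * ((hEAR S:ℝ) * Real.log ((kS S:ℝ)+1)) :=
      mul_le_mul hβ hlogM hlogM0 h0
    calc ((roundEqs S f (Bs.get i)).card : ℝ) ≤ ((Bs.get i).card : ℝ) := hcardle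
      _ ≤ (betaS M : ℝ) * Real.log (M.card : ℝ) + 1 := hbound
      _ ≤ (hEAR S:ℝ) * ((hEAR S:ℝ) * Real.log ((kS S:ℝ)+1)) + 1 := by linarith
      _ = (hEAR S:ℝ)^2 * Real.log ((kS S:ℝ)+1) + 1 := by ring
  refine ⟨fun Bs h => partialRun_length_le hWF h, hdle, ?_, ?_, ?_⟩
  · apply exists_finished S f (dS S) []
    · intro i
      exact absurd i.2 (by simp)
    · rw [accAlpha_nil, sysRestrict_empty hWF]
  · intro Bs hrun hfin
    refine ⟨?_, finished_filter_eq hfin⟩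
    have hC0 : 0 ≤ (hEAR S:ℝ)^2 * Real.log ((kS S:ℝ)+1) + 1 := by
      have := mul_nonneg (pow_nonneg h0 2) hlogk
      linarith
    have hcast : ((Bs.map (fun B => (roundEqs S f B).card)).sum : ℝ) =
        (Bs.map (fun B => ((roundEqs S f B).card : ℝ))).sum := by
      rw [Nat.cast_list_sum, List.map_map]
      rfl
    have hsum : (Bs.map (fun B => ((roundEqs S f B).card : ℝ))).sum ≤
        (Bs.length : ℝ) * ((hEAR S:ℝ)^2 * Real.log ((kS S:ℝ)+1) + 1) := by
      have hb := List.sum_le_card_nsmul (Bs.map (fun B => ((roundEqs S f B).card : ℝ)))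
        ((hEAR S:ℝ)^2 * Real.log ((kS S:ℝ)+1) + 1) ?_
      · rwa [List.length_map, nsmul_eq_mul] at hb
      · intro x hx
        obtain ⟨B, hB, rfl⟩ := List.mem_map.mp hx
        obtain ⟨i, hi⟩ := List.mem_iff_get.mp hB
        rw [← hi]
        exact hterm Bs hrun i
    have hlenle : (Bs.length : ℝ) ≤ (hEAR S : ℝ) := by
      exact_mod_cast le_trans (partialRun_length_le hWF hrun) hdle
    calc ((Bs.map (fun B => (roundEqs S f B).card)).sum : ℝ)
        = (Bs.map (fun B => ((roundEqs S f B).card : ℝ))).sum := hcast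
      _ ≤ (Bs.length : ℝ) * ((hEAR S:ℝ)^2 * Real.log ((kS S:ℝ)+1) + 1) := hsum
      _ ≤ (hEAR S:ℝ) * ((hEAR S:ℝ)^2 * Real.log ((kS S:ℝ)+1) + 1) :=
          mul_le_mul_of_nonneg_right hlenle hC0
      _ = (hEAR S : ℝ) ^ 3 * Real.log ((kS S:ℝ) + 1) + (hEAR S : ℝ) := by ring
  · refine ⟨Γ0, hΓ0, ?_⟩
    rw [hΓ0d]
    have hn3 : 0 ≤ (hEAR S:ℝ)^3 * Real.log ((kS S:ℝ)+1) :=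
      mul_nonneg (pow_nonneg h0 3) hlogk
    linarith
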